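/- Let G = (V,E) be a finite, connected, bipartite, cubic graph, let A ⊆ E be a 2-factor of G, let x ∈ V, and let x' be any neighbor of x in G. Then there exists a path z_1 z_2 ⋯ z_{2k} in G (with the z_i pairwise distinct vertices and each z_i z_{i+1} ∈ E) such that z_1 = x, z_{2k} = x', z_i z_{i+1} ∉ A for every odd i with 1 ≤ i ≤ 2k−1, and z_i z_{i+1} ∈ A for every even i with 1 ≤ i ≤ 2k−1. -/

import Mathlib

open Finset

/-- The degree of a vertex `x` in the spanning subgraph `(V, A)`:
the number of edges of `A` incident to `x`. -/
def degA {V : Type*} [DecidableEq V] (A : Finset (Sym2 V)) (x : V) : ℕ :=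
  (A.filter fun e => x ∈ e).card

lemma closed_under_pred {α : Type*} [Fintype α] [DecidableEq α] (r : α → α → Prop)
    [DecidableRel r] (d : ℕ)
    (hout : ∀ w, (univ.filter fun u => r w u).card = d)
    (hin : ∀ u, (univ.filter fun w => r w u).card = d)
    (R : Finset α) (hR : ∀ w ∈ R, ∀ u, r w u → u ∈ R) :
    ∀ u ∈ R, ∀ w, r w u → w ∈ R := by
  set S : Finset (α × α) :=
    R.biUnion (fun w => (univ.filter fun u => r w u).image (fun u => (w, u))) with hS
  set T : Finset (α × α) :=
    R.biUnion (fun u => (univ.filter fun w => r w u).image (fun w => (w, u))) with hT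
  have hfst : ∀ w, ∀ p ∈ (univ.filter fun u => r w u).image (fun u => (w, u)), p.1 = w := by
    intro w p hp; rw [mem_image] at hp; obtain ⟨u, _, rfl⟩ := hp; rfl
  have hsnd : ∀ u, ∀ p ∈ (univ.filter fun w => r w u).image (fun w => (w, u)), p.2 = u := by
    intro u p hp; rw [mem_image] at hp; obtain ⟨w, _, rfl⟩ := hp; rfl
  have hScard : S.card = d * R.card := by
    rw [hS, card_biUnion]
    · rw [Finset.sum_congr rfl (fun w _ => by
        rw [card_image_of_injective _ (fun a b h => by simpa using congrArg Prod.snd h), hout w])]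
      simp [mul_comm]
    · intro a _ b _ hab
      exact Finset.disjoint_left.mpr fun {p} hp1 hp2 =>
        hab (by rw [← hfst a _ hp1, hfst b _ hp2])
  have hTcard : T.card = d * R.card := by
    rw [hT, card_biUnion]
    · rw [Finset.sum_congr rfl (fun u _ => by
        rw [card_image_of_injective _ (fun a b h => by simpa using congrArg Prod.fst h), hin u])]
      simp [mul_comm]
    · intro a _ b _ hab
      exact Finset.disjoint_left.mpr fun {p} hp1 hp2 =>
        hab (by rw [← hsnd a _ hp1, hsnd b _ hp2])
  have hST : S ⊆ T := by
    intro p hp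
    rw [hS, mem_biUnion] at hp
    obtain ⟨w, hw, hp⟩ := hp
    rw [mem_image] at hp
    obtain ⟨u, hu, rfl⟩ := hp
    rw [mem_filter] at hu
    rw [hT, mem_biUnion]
    exact ⟨u, hR w hw u hu.2, by rw [mem_image]; exact ⟨w, by simp [hu.2], rfl⟩⟩
  have hEq : S = T := eq_of_subset_of_card_le hST (by rw [hScard, hTcard])
  intro u hu w hwu
  have hmem : (w, u) ∈ T := by
    rw [hT, mem_biUnion]
    exact ⟨u, hu, by rw [mem_image]; exact ⟨w, by simp [hwu], rfl⟩⟩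
  rw [← hEq, hS, mem_biUnion] at hmem
  obtain ⟨w', hw', hmem⟩ := hmem
  have := hfst w' _ hmem
  simp only at this
  rwa [← this] at hw'

lemma not_nodup_decomp {α : Type*} : ∀ (l : List α), ¬ l.Nodup →
    ∃ (v : α) (l₁ l₂ l₃ : List α), l = l₁ ++ v :: l₂ ++ v :: l₃ := by
  intro l
  induction l with
  | nil => intro h; exact absurd List.nodup_nil h
  | cons a t ih =>
    intro h
    by_cases hat : a ∈ t
    · obtain ⟨s, u, rfl⟩ := List.append_of_mem hat
      exact ⟨a, [], s, u, rfl⟩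
    · have : ¬ t.Nodup := fun hn => h (List.nodup_cons.mpr ⟨hat, hn⟩)
      obtain ⟨v, l₁, l₂, l₃, rfl⟩ := ih this
      exact ⟨v, a :: l₁, l₂, l₃, rfl⟩

lemma exists_nodup_chain' {α : Type*} (r : α → α → Prop) :
    ∀ (n : ℕ) (l : List α), l.length ≤ n → l.Chain' r →
    ∃ l' : List α, l'.Nodup ∧ l'.Chain' r ∧ l'.head? = l.head? ∧ l'.getLast? = l.getLast? := by
  intro n
  induction n with
  | zero =>
    intro l hl hc
    rw [Nat.le_zero, List.length_eq_zero_iff] at hl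
    subst hl
    exact ⟨[], List.nodup_nil, hc, rfl, rfl⟩
  | succ m ih =>
    intro l hl hc
    by_cases hnd : l.Nodup
    · exact ⟨l, hnd, hc, rfl, rfl⟩
    · obtain ⟨v, l₁, l₂, l₃, rfl⟩ := not_nodup_decomp l hnd
      have hrw : l₁ ++ v :: l₂ ++ v :: l₃ = l₁ ++ ((v :: l₂) ++ (v :: l₃)) := by simp
      rw [hrw] at hl hc
      rw [List.Chain', List.isChain_append] at hc
      obtain ⟨hc1, hc2, hc3⟩ := hc
      rw [List.isChain_append] at hc2
      obtain ⟨hc21, hc22, hc23⟩ := hc2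
      have hlen : (l₁ ++ v :: l₃).length ≤ m := by
        simp only [List.length_append, List.length_cons] at hl ⊢
        omega
      have hchain : (l₁ ++ v :: l₃).Chain' r := by
        rw [List.Chain', List.isChain_append]
        refine ⟨hc1, hc22, ?_⟩
        intro x hx y hy
        exact hc3 x hx y (by simpa using hy)
      obtain ⟨l', hnd', hc', hh', hl'⟩ := ih _ hlen hchain
      refine ⟨l', hnd', hc', ?_, ?_⟩
      · rw [hh', List.head?_append, List.head?_append]
        rcases h : l₁.head? with _ | a <;> simp [h]
      · rw [hl', List.getLast?_append,
          show l₁ ++ v :: l₂ ++ v :: l₃ = (l₁ ++ v :: l₂) ++ (v :: l₃) by simp,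
          List.getLast?_append, List.getLast?_eq_getLast (l := v :: l₃) (List.cons_ne_nil _ _)]
        simp
open Finset

lemma fin2_lemma : ∀ a b c : Fin 2, a ≠ b → c ≠ b → a = c := by decide

/-- In a finite connected bipartite cubic graph with a 2-factor `A`, between any vertex `x`
and any neighbour `x'` there is an alternating path `z₁ z₂ ⋯ z_{2k}` (here 0-indexed as
`z 0, …, z (2k-1)`) whose odd-numbered edges (1-indexed) are vacant and whose even-numbered
edges are occupied. -/
theorem exists_alternating_path
    {V : Type*} [Fintype V] [DecidableEq V]
    (G : SimpleGraph V) [DecidableRel G.Adj]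
    (hconn : G.Connected) (hbip : G.Colorable 2)
    (hcubic : ∀ w, G.degree w = 3)
    (A : Finset (Sym2 V)) (hA : A ⊆ G.edgeFinset)
    (h2f : ∀ w, degA A w = 2)
    (x x' : V) (hadj : G.Adj x x') :
    ∃ (k : ℕ) (z : ℕ → V), 1 ≤ k ∧ z 0 = x ∧ z (2 * k - 1) = x' ∧
      (∀ i j, i < 2 * k → j < 2 * k → z i = z j → i = j) ∧
      (∀ i, i + 1 < 2 * k → G.Adj (z i) (z (i + 1))) ∧
      (∀ i, i + 1 < 2 * k → (Even i ↔ s(z i, z (i + 1)) ∉ A)) := by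
  classical
  obtain ⟨c⟩ := hbip
  have hAadj : ∀ u v : V, s(u, v) ∈ A → G.Adj u v := by
    intro u v h
    have := hA h
    rwa [SimpleGraph.mem_edgeFinset, SimpleGraph.mem_edgeSet] at this
  -- each vertex has exactly two A-neighbours
  have hAcard : ∀ w : V, (univ.filter fun v => s(w, v) ∈ A).card = 2 := by
    intro w
    have h2 := h2f w
    unfold degA at h2
    rw [← h2]
    apply Finset.card_bij (fun v _ => s(w, v))
    · intro v hv
      rw [mem_filter] at hv
      rw [mem_filter]
      exact ⟨hv.2, Sym2.mem_mk_left w v⟩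
    · intro v1 hv1 v2 hv2 h
      exact Sym2.congr_right.mp h
    · intro e he
      rw [mem_filter] at he
      obtain ⟨heA, hwe⟩ := he
      refine ⟨Sym2.Mem.other hwe, ?_, Sym2.other_spec hwe⟩
      rw [mem_filter, Sym2.other_spec hwe]
      exact ⟨mem_univ _, heA⟩
  -- the matching partner function M
  have hMex : ∀ w : V, ∃ v : V, (G.Adj w v ∧ s(w, v) ∉ A) ∧
      ∀ u : V, G.Adj w u → s(w, u) ∉ A → u = v := by
    intro w
    have hsub : (univ.filter fun v => s(w, v) ∈ A) ⊆ G.neighborFinset w := by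
      intro v hv
      rw [mem_filter] at hv
      rw [SimpleGraph.mem_neighborFinset]
      exact hAadj w v hv.2
    have hcard : (G.neighborFinset w \ (univ.filter fun v => s(w, v) ∈ A)).card = 1 := by
      rw [card_sdiff_of_subset hsub, SimpleGraph.card_neighborFinset_eq_degree, hcubic w, hAcard w]
    obtain ⟨v, hv⟩ := Finset.card_eq_one.mp hcard
    have hvmem : v ∈ G.neighborFinset w \ (univ.filter fun u => s(w, u) ∈ A) := by
      rw [hv]; exact mem_singleton_self v
    rw [mem_sdiff, SimpleGraph.mem_neighborFinset, mem_filter] at hvmem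
    refine ⟨v, ⟨hvmem.1, fun hA' => hvmem.2 ⟨mem_univ v, hA'⟩⟩, ?_⟩
    intro u hu hnA
    have : u ∈ G.neighborFinset w \ (univ.filter fun z => s(w, z) ∈ A) := by
      rw [mem_sdiff, SimpleGraph.mem_neighborFinset, mem_filter]
      exact ⟨hu, fun h => hnA h.2⟩
    rw [hv, mem_singleton] at this
    exact this
  choose M hM hMuniq using hMex
  have hMadj : ∀ w, G.Adj w (M w) := fun w => (hM w).1
  have hMnA : ∀ w, s(w, M w) ∉ A := fun w => (hM w).2
  have hMinv : ∀ w, M (M w) = w := by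
    intro w
    have := hMuniq (M w) w (hMadj w).symm (by rw [Sym2.eq_swap]; exact hMnA w)
    exact this.symm
  have hMinj : Function.Injective M := by
    intro a b h
    have := congrArg M h
    rwa [hMinv, hMinv] at this
  -- the alternating-step digraph
  set Dstep : V → V → Prop := fun w u => s(w, M u) ∈ A with hDstep
  have hout : ∀ w, (univ.filter fun u => Dstep w u).card = 2 := by
    intro w
    have him : (univ.filter fun u => Dstep w u) =
        (univ.filter fun v => s(w, v) ∈ A).image M := by
      ext u
      simp only [mem_filter, mem_image, mem_univ, true_and]
      constructor
      · intro h
        exact ⟨M u, h, hMinv u⟩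
      · rintro ⟨v, hv, rfl⟩
        show s(w, M (M v)) ∈ A
        rwa [hMinv]
    rw [him, card_image_of_injective _ hMinj, hAcard]
  have hin : ∀ u, (univ.filter fun w => Dstep w u).card = 2 := by
    intro u
    have him : (univ.filter fun w => Dstep w u) =
        (univ.filter fun v => s(M u, v) ∈ A) := by
      ext w
      simp only [mem_filter, mem_univ, true_and]
      rw [Sym2.eq_swap]
    rw [him, hAcard]
  -- the reachable set
  set R : Finset V := univ.filter (fun u => Relation.ReflTransGen Dstep (M x) u) with hR
  have hRfwd : ∀ w ∈ R, ∀ u, Dstep w u → u ∈ R := by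
    intro w hw u hwu
    rw [hR, mem_filter] at hw ⊢
    exact ⟨mem_univ u, hw.2.tail hwu⟩
  have hRbwd : ∀ u ∈ R, ∀ w, Dstep w u → w ∈ R :=
    closed_under_pred Dstep 2 hout hin R hRfwd
  -- colours
  have hcstep : ∀ w u, Dstep w u → c u = c w := by
    intro w u h
    have h1 : c w ≠ c (M u) := c.valid (hAadj _ _ h)
    have h2 : c u ≠ c (M u) := c.valid (hMadj u)
    exact fin2_lemma _ _ _ h2 h1
  have hcR : ∀ u, Relation.ReflTransGen Dstep (M x) u → c u = c (M x) := by
    intro u hu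
    induction hu with
    | refl => rfl
    | tail h1 h2 ih => rw [hcstep _ _ h2]; exact ih
  -- x' is reachable in the digraph
  have hSclosed : ∀ v w : V, G.Adj v w →
      (Relation.ReflTransGen Dstep (M x) v ∨ Relation.ReflTransGen Dstep (M x) (M v)) →
      (Relation.ReflTransGen Dstep (M x) w ∨ Relation.ReflTransGen Dstep (M x) (M w)) := by
    intro v w hvw hv
    by_cases hvwA : s(v, w) ∈ A
    · cases hv with
      | inl h =>
        right
        refine h.tail ?_
        show s(v, M (M w)) ∈ A
        rwa [hMinv]
      | inr h =>
        left
        have hDw : Dstep w (M v) := by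
          show s(w, M (M v)) ∈ A
          rw [hMinv, Sym2.eq_swap]
          exact hvwA
        have hMvR : M v ∈ R := by rw [hR, mem_filter]; exact ⟨mem_univ _, h⟩
        have := hRbwd (M v) hMvR w hDw
        rw [hR, mem_filter] at this
        exact this.2
    · have hw : w = M v := hMuniq v w hvw hvwA
      cases hv with
      | inl h =>
        right
        rw [hw, hMinv]
        exact h
      | inr h =>
        left
        rw [hw]
        exact h
  have hreachG : Relation.ReflTransGen G.Adj (M x) x' := by
    rw [← SimpleGraph.reachable_iff_reflTransGen]
    exact hconn.preconnected (M x) x'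
  have hxS : Relation.ReflTransGen Dstep (M x) x' ∨
      Relation.ReflTransGen Dstep (M x) (M x') := by
    clear hadj
    induction hreachG with
    | refl => exact Or.inl Relation.ReflTransGen.refl
    | tail h1 h2 ih => exact hSclosed _ _ h2 ih
  have hreach : Relation.ReflTransGen Dstep (M x) x' := by
    cases hxS with
    | inl h => exact h
    | inr h =>
      exfalso
      have h1 : c (M x') = c (M x) := hcR _ h
      have h2 : c x' ≠ c (M x') := c.valid (hMadj x')
      have h3 : c (M x) ≠ c x := (c.valid (hMadj x)).symm
      have h4 : c x' ≠ c x := (c.valid hadj).symm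
      have := fin2_lemma _ _ _ h3 h4
      rw [h1, this] at h2
      exact h2 rfl
  -- extract a duplicate-free chain
  obtain ⟨l0, hchain0, hlast0⟩ := List.exists_isChain_cons_of_relationReflTransGen hreach
  have hchainL0 : (M x :: l0).Chain' Dstep := hchain0
  obtain ⟨l, hnd, hc, hh, hl⟩ :=
    exists_nodup_chain' Dstep (M x :: l0).length (M x :: l0) le_rfl hchainL0
  have hhead : l.head? = some (M x) := by rw [hh]; rfl
  have hne : l ≠ [] := by
    intro h; rw [h] at hhead; simp at hhead
  have hlpos : 0 < l.length := List.length_pos_iff.mpr hne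
  have hlast : l.getLast? = some x' := by
    rw [hl, List.getLast?_eq_getLast (List.cons_ne_nil _ _)]
    exact congrArg some hlast0
  have hl0 : l[0]'hlpos = M x := by
    have := List.head?_eq_head hne
    rw [hhead] at this
    have h2 := this.symm
    rw [Option.some.injEq] at h2
    rw [← h2, List.head_eq_getElem]
  have hllast : l[l.length - 1]'(by omega) = x' := by
    rw [List.getLast?_eq_getLast hne] at hlast
    rw [Option.some.injEq] at hlast
    rw [← hlast, List.getLast_eq_getElem]
  have hstep : ∀ i (h : i + 1 < l.length), Dstep (l[i]'(by omega)) (l[i+1]'h) := by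
    intro i h
    have := List.isChain_iff_getElem.mp hc i (by omega)
    simpa using this
  -- colours along the chain
  have hlc : ∀ i (h : i < l.length), c (l[i]'h) = c (M x) := by
    intro i
    induction i with
    | zero => intro h; rw [hl0]
    | succ n ih =>
      intro h
      rw [hcstep _ _ (hstep n h)]
      exact ih (by omega)
  -- nodup via getElem
  have hndget : ∀ i j (hi : i < l.length) (hj : j < l.length),
      l[i]'hi = l[j]'hj → i = j := by
    intro i j hi hj hij
    have := (List.Nodup.get_inj_iff hnd (i := ⟨i, hi⟩) (j := ⟨j, hj⟩)).mp (by simpa using hij)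
    simpa using this
  -- the path
  refine ⟨l.length, fun n => if n % 2 = 1 then l.getD ((n-1)/2) x else M (l.getD (n/2) x),
    hlpos, ?_, ?_, ?_, ?_, ?_⟩
  all_goals beta_reduce
  case _ =>
    simp only [Nat.zero_mod, Nat.zero_div, if_neg (by omega : ¬ (0:ℕ) % 2 = 1)]
    rw [List.getD_eq_getElem _ _ hlpos, hl0, hMinv]
  case _ =>
    have h1 : (2 * l.length - 1) % 2 = 1 := by omega
    rw [if_pos h1]
    have h2 : (2 * l.length - 1 - 1) / 2 = l.length - 1 := by omega
    rw [h2, List.getD_eq_getElem _ _ (by omega), hllast]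
  case _ =>
    intro i j hi hj
    beta_reduce
    intro hzeq
    have hzodd : ∀ a (h : a < l.length),
        (if (2*a+1) % 2 = 1 then l.getD ((2*a+1-1)/2) x else M (l.getD ((2*a+1)/2) x)) = l[a]'h := by
      intro a h
      rw [if_pos (by omega)]
      have : (2*a+1-1)/2 = a := by omega
      rw [this, List.getD_eq_getElem _ _ h]
    have hzeven : ∀ a (h : a < l.length),
        (if (2*a) % 2 = 1 then l.getD ((2*a-1)/2) x else M (l.getD ((2*a)/2) x)) = M (l[a]'h) := by
      intro a h
      rw [if_neg (by omega)]
      have : (2*a)/2 = a := by omega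
      rw [this, List.getD_eq_getElem _ _ h]
    rcases Nat.even_or_odd i with ⟨a, ha⟩ | ⟨a, ha⟩ <;>
      rcases Nat.even_or_odd j with ⟨b, hb⟩ | ⟨b, hb⟩
    · -- both even
      have hi' : i = 2*a := by omega
      have hj' : j = 2*b := by omega
      subst hi'; subst hj'
      rw [hzeven a (by omega), hzeven b (by omega)] at hzeq
      have := hndget a b (by omega) (by omega) (hMinj hzeq)
      omega
    · -- i even, j odd
      have hi' : i = 2*a := by omega
      have hj' : j = 2*b+1 := by omega
      subst hi'; subst hj'
      rw [hzeven a (by omega), hzodd b (by omega)] at hzeq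
      exfalso
      have h1 : c (M (l[a]'(by omega))) = c (l[b]'(by omega)) := congrArg c hzeq
      have h2 : c (l[a]'(by omega)) ≠ c (M (l[a]'(by omega))) := c.valid (hMadj _)
      rw [h1, hlc a (by omega), hlc b (by omega)] at h2
      exact h2 rfl
    · -- i odd, j even
      have hi' : i = 2*a+1 := by omega
      have hj' : j = 2*b := by omega
      subst hi'; subst hj'
      rw [hzodd a (by omega), hzeven b (by omega)] at hzeq
      exfalso
      have h2 : c (l[b]'(by omega)) ≠ c (M (l[b]'(by omega))) := c.valid (hMadj _)
      rw [← hzeq, hlc a (by omega), hlc b (by omega)] at h2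
      exact h2 rfl
    · -- both odd
      have hi' : i = 2*a+1 := by omega
      have hj' : j = 2*b+1 := by omega
      subst hi'; subst hj'
      rw [hzodd a (by omega), hzodd b (by omega)] at hzeq
      have := hndget a b (by omega) (by omega) hzeq
      omega
  case _ =>
    intro i hi
    beta_reduce
    rcases Nat.even_or_odd i with ⟨a, ha⟩ | ⟨a, ha⟩
    · have hi' : i = 2*a := by omega
      subst hi'
      have ha' : a < l.length := by omega
      have e1 : (if (2*a) % 2 = 1 then l.getD ((2*a-1)/2) x else M (l.getD ((2*a)/2) x)) = M (l[a]'ha') := by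
        rw [if_neg (by omega)]
        have : (2*a)/2 = a := by omega
        rw [this, List.getD_eq_getElem _ _ ha']
      have e2 : (if (2*a+1) % 2 = 1 then l.getD ((2*a+1-1)/2) x else M (l.getD ((2*a+1)/2) x)) = l[a]'ha' := by
        rw [if_pos (by omega)]
        have : (2*a+1-1)/2 = a := by omega
        rw [this, List.getD_eq_getElem _ _ ha']
      rw [e1, e2]
      exact (hMadj _).symm
    · have hi' : i = 2*a+1 := by omega
      subst hi'
      have ha' : a + 1 < l.length := by omega
      have e1 : (if (2*a+1) % 2 = 1 then l.getD ((2*a+1-1)/2) x else M (l.getD ((2*a+1)/2) x)) = l[a]'(by omega) := by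
        rw [if_pos (by omega)]
        have : (2*a+1-1)/2 = a := by omega
        rw [this, List.getD_eq_getElem _ _ (by omega)]
      have e2 : (if (2*a+1+1) % 2 = 1 then l.getD ((2*a+1+1-1)/2) x else M (l.getD ((2*a+1+1)/2) x)) = M (l[a+1]'ha') := by
        rw [if_neg (by omega)]
        have : (2*a+1+1)/2 = a+1 := by omega
        rw [this, List.getD_eq_getElem _ _ ha']
      rw [e1, e2]
      exact hAadj _ _ (hstep a ha')
  case _ =>
    intro i hi
    beta_reduce
    rcases Nat.even_or_odd i with ⟨a, ha⟩ | ⟨a, ha⟩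
    · have hi' : i = 2*a := by omega
      subst hi'
      have ha' : a < l.length := by omega
      have e1 : (if (2*a) % 2 = 1 then l.getD ((2*a-1)/2) x else M (l.getD ((2*a)/2) x)) = M (l[a]'ha') := by
        rw [if_neg (by omega)]
        have : (2*a)/2 = a := by omega
        rw [this, List.getD_eq_getElem _ _ ha']
      have e2 : (if (2*a+1) % 2 = 1 then l.getD ((2*a+1-1)/2) x else M (l.getD ((2*a+1)/2) x)) = l[a]'ha' := by
        rw [if_pos (by omega)]
        have : (2*a+1-1)/2 = a := by omega
        rw [this, List.getD_eq_getElem _ _ ha']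
      rw [e1, e2]
      refine iff_of_true ⟨a, by ring⟩ ?_
      rw [Sym2.eq_swap]
      exact hMnA _
    · have hi' : i = 2*a+1 := by omega
      subst hi'
      have ha' : a + 1 < l.length := by omega
      have e1 : (if (2*a+1) % 2 = 1 then l.getD ((2*a+1-1)/2) x else M (l.getD ((2*a+1)/2) x)) = l[a]'(by omega) := by
        rw [if_pos (by omega)]
        have : (2*a+1-1)/2 = a := by omega
        rw [this, List.getD_eq_getElem _ _ (by omega)]
      have e2 : (if (2*a+1+1) % 2 = 1 then l.getD ((2*a+1+1-1)/2) x else M (l.getD ((2*a+1+1)/2) x)) = M (l[a+1]'ha') := by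
        rw [if_neg (by omega)]
        have : (2*a+1+1)/2 = a+1 := by omega
        rw [this, List.getD_eq_getElem _ _ ha']
      rw [e1, e2]
      refine iff_of_false ?_ (not_not_intro (hstep a ha'))
      intro hEv
      rw [Nat.even_iff] at hEv
      omega
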